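/- Let 0 < r < n be integers with n − r dividing n, and let q be a prime power. Then the space of bilinear forms on an n-dimensional F_q-vector space contains a subspace of dimension 2n in which every nonzero element has rank either r or n. -/

import Mathlib

open Polynomial Module

lemma exists_primroot (L : Type*) [Field L] [Fintype L] {d : ℕ} (hd : 0 < d)
    (hdvd : d ∣ Fintype.card L - 1) : ∃ ζ : L, IsPrimitiveRoot ζ d := by
  classical
  obtain ⟨g, hg⟩ := IsCyclic.exists_ofOrder_eq_natCard (α := Lˣ)
  have hN : Nat.card Lˣ = Fintype.card L - 1 := by
    rw [Nat.card_eq_fintype_card, Fintype.card_units]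
  set N := Fintype.card L - 1 with hNdef
  have hN0 : 0 < N := by
    have := Fintype.one_lt_card (α := L)
    omega
  rw [hN] at hg
  obtain ⟨k, hk⟩ := hdvd
  have hk0 : 0 < k := by
    rcases Nat.eq_zero_or_pos k with h | h
    · subst h; omega
    · exact h
  have hord : orderOf (g ^ k) = d := by
    rw [orderOf_pow, hg, hk, Nat.gcd_eq_right ⟨d, by ring⟩]
    rw [mul_comm]; exact Nat.mul_div_cancel_left d hk0
  refine ⟨((g ^ k : Lˣ) : L), ?_⟩
  have : orderOf ((g ^ k : Lˣ) : L) = d := by rw [orderOf_units, hord]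
  exact this ▸ IsPrimitiveRoot.orderOf _

lemma ncard_solset {L : Type*} [Field L] [Fintype L] {d : ℕ} (hd : 0 < d)
    (hdvd : d ∣ Fintype.card L - 1) {c x0 : L} (hc : c ≠ 0) (hx0 : x0 ^ d = c) :
    {x : L | x ^ d = c}.ncard = d := by
  classical
  obtain ⟨ζ, hζ⟩ := exists_primroot L hd hdvd
  have hset : {x : L | x ^ d = c} = ↑(nthRoots d c).toFinset := by
    ext x
    simp [mem_nthRoots hd]
  rw [hset, Set.ncard_coe_finset, Multiset.toFinset_card_of_nodup (hζ.nthRoots_nodup hc)]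
  rw [hζ.card_nthRoots c, if_pos ⟨x0, hx0⟩]

lemma exists_bigfield (K : Type*) [Field K] [Fintype K] (n : ℕ) (hn : 0 < n) :
    ∃ E : IntermediateField K (AlgebraicClosure K),
      Nat.card E = Fintype.card K ^ n := by
  classical
  set p := ringChar K with hp
  haveI : Fact p.Prime := ⟨CharP.char_is_prime K p⟩
  obtain ⟨v, hvp, hcard⟩ := FiniteField.card K p
  set A := AlgebraicClosure K
  haveI : CharP A p := charP_of_injective_algebraMap (algebraMap K A).injective p
  have hq1 : 1 < Fintype.card K := Fintype.one_lt_card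
  have he : Fintype.card K ^ n = p ^ (v * n) := by rw [hcard, pow_mul]
  have hppow : p ∣ Fintype.card K ^ n := by
    rw [he]
    exact dvd_pow_self p (by positivity)
  set e := Fintype.card K ^ n with hedef
  have he0 : e ≠ 0 := by positivity
  let S : Subalgebra K A :=
  { carrier := {x : A | x ^ e = x}
    mul_mem' := fun {a b} ha hb => by
      simp only [Set.mem_setOf_eq] at *
      rw [mul_pow, ha, hb]
    one_mem' := by simp
    add_mem' := fun {a b} ha hb => by
      simp only [Set.mem_setOf_eq] at *
      rw [he] at ha hb ⊢
      rw [add_pow_char_pow, ha, hb]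
    zero_mem' := by simp [zero_pow he0]
    algebraMap_mem' := fun c => by
      simp only [Set.mem_setOf_eq]
      rw [← map_pow, FiniteField.pow_card_pow] }
  have hinv : ∀ x ∈ S, x⁻¹ ∈ S := fun x hx => by
    show x⁻¹ ^ e = x⁻¹
    rw [inv_pow]
    exact congrArg Inv.inv hx
  refine ⟨S.toIntermediateField hinv, ?_⟩
  -- cardinality
  set P : A[X] := X ^ e - X with hP
  have hPdeg : P.natDegree = e :=
    FiniteField.X_pow_card_pow_sub_X_natDegree_eq A (n := n) (p := Fintype.card K)
      hn.ne' hq1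
  have hPsep : P.Separable := by
    rw [hP]
    exact galois_poly_separable p e hppow
  have hP0 : P ≠ 0 :=
    FiniteField.X_pow_card_pow_sub_X_ne_zero A (n := n) (p := Fintype.card K) hn.ne' hq1
  have hsplits : P.Splits := IsAlgClosed.splits P
  have hroots : Multiset.card P.roots = e := by
    rw [← hPdeg]
    exact (splits_iff_card_roots.mp hsplits)
  have hnodup : P.roots.Nodup := Polynomial.nodup_roots hPsep
  have hsetS : ((S.toIntermediateField hinv : IntermediateField K A) : Set A)
      = ↑P.roots.toFinset := by
    ext x
    show x ^ e = x ↔ _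
    rw [Finset.mem_coe, Multiset.mem_toFinset, mem_roots hP0, IsRoot.def, hP, eval_sub,
      eval_pow, eval_X, sub_eq_zero]
  calc Nat.card (S.toIntermediateField hinv)
      = (↑P.roots.toFinset : Set A).ncard := by
        rw [← Nat.card_coe_set_eq]
        exact Nat.card_congr (Equiv.setCongr hsetS)
    _ = Fintype.card K ^ n := by
        rw [Set.ncard_coe_finset, Multiset.toFinset_card_of_nodup hnodup, hroots]

lemma key (K L : Type*) [Field K] [Fintype K] [Field L] [Fintype L] [Algebra K L]
    (n m : ℕ) (hn : finrank K L = n) (hm : 0 < m) (hmn : m < n) (hdvd : m ∣ n) :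
    ∃ M : Submodule K (L →ₗ[K] L →ₗ[K] K), finrank K ↥M = 2 * n ∧
      ∀ f ∈ M, f ≠ 0 →
        finrank K (LinearMap.ker f) = 0 ∨ finrank K (LinearMap.ker f) = m := by
  classical
  set q := Fintype.card K with hq
  have hq2 : 2 ≤ q := Fintype.one_lt_card
  have hcardL : Fintype.card L = q ^ n := by rw [card_eq_pow_finrank (K := K), hn]
  set p := ringChar K with hp
  haveI : Fact p.Prime := ⟨CharP.char_is_prime K p⟩
  obtain ⟨v, hvp, hcard⟩ := FiniteField.card K p
  haveI : CharP L p := charP_of_injective_algebraMap (algebraMap K L).injective p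
  set E := q ^ m with hE
  have hEp : E = p ^ (v * m) := by rw [hE, hq, hcard, pow_mul]
  -- the K-linear Frobenius power
  set ψ : L →ₗ[K] L :=
    { toFun := fun x => x ^ E
      map_add' := fun x y => by rw [hEp]; exact add_pow_char_pow x y p (v*m)
      map_smul' := fun c x => by
        simp only [RingHom.id_apply, Algebra.smul_def, mul_pow, ← map_pow]
        rw [hE, FiniteField.pow_card_pow] } with hψ
  set Tf := Algebra.traceForm K L with hTf
  have hTfnd : Tf.Nondegenerate := traceForm_nondegenerate K L
  set ℓ : L × L → (L →ₗ[K] L) := fun ab => ab.1 • LinearMap.id + ab.2 • ψ with hℓ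
  set Φ : (L × L) →ₗ[K] (L →ₗ[K] L →ₗ[K] K) :=
    { toFun := fun ab => Tf ∘ₗ (ℓ ab)
      map_add' := fun ab cd => by
        ext x y
        simp only [hℓ, LinearMap.comp_apply, LinearMap.add_apply, LinearMap.smul_apply,
          LinearMap.id_coe, id_eq, smul_eq_mul, Prod.fst_add, Prod.snd_add,
          Algebra.traceForm_apply, hψ, LinearMap.coe_mk, AddHom.coe_mk]
        rw [show (ab.1 + cd.1) * x + (ab.2 + cd.2) * x ^ E
            = (ab.1 * x + ab.2 * x ^ E) + (cd.1 * x + cd.2 * x ^ E) by ring, map_add,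
          LinearMap.add_apply]
      map_smul' := fun c ab => by
        ext x y
        simp only [hℓ, LinearMap.comp_apply, LinearMap.add_apply, LinearMap.smul_apply,
          LinearMap.id_coe, id_eq, smul_eq_mul, Prod.smul_fst, Prod.smul_snd,
          Algebra.traceForm_apply, hψ, LinearMap.coe_mk, AddHom.coe_mk, RingHom.id_apply,
          Algebra.smul_def]
        rw [show ((algebraMap K (L × L)) c * ab).1 * x + ((algebraMap K (L × L)) c * ab).2 * x ^ E
            = c • ((ab.1 * x + ab.2 * x ^ E)) by
              simp [smul_add, Algebra.smul_def, mul_assoc, mul_add],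
          map_smul, LinearMap.smul_apply, smul_eq_mul] } with hΦ
  have hℓapp : ∀ (ab : L × L) (x : L), ℓ ab x = ab.1 * x + ab.2 * x ^ E := fun ab x => rfl
  have hΦapp : ∀ (ab : L × L) (x y : L),
      Φ ab x y = Tf (ab.1 * x + ab.2 * x ^ E) y := fun ab x y => rfl
  have hE2 : 2 ≤ E := by
    calc 2 = 2 ^ 1 := rfl
    _ ≤ q ^ 1 := Nat.pow_le_pow_left hq2 1
    _ ≤ q ^ m := Nat.pow_le_pow_right (by omega) hm
  -- injectivity of Φ
  have hker0 : ∀ ab : L × L, Φ ab = 0 → ab = 0 := by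
    intro ab h
    have hz : ∀ x : L, ab.1 * x + ab.2 * x ^ E = 0 := by
      intro x
      apply hTfnd.1
      intro y
      have hxy : Φ ab x y = 0 := by rw [h]; rfl
      rwa [hΦapp] at hxy
    have h1 : ab.1 + ab.2 = 0 := by simpa using hz 1
    have hne : ∃ x : L, x ^ E ≠ x := by
      by_contra hall
      push_neg at hall
      have hP0 : (X ^ E - X : L[X]) ≠ 0 := by
        rw [hE]
        exact FiniteField.X_pow_card_pow_sub_X_ne_zero L hm.ne' hq2
      have hsub : (Finset.univ : Finset L) ⊆ (X ^ E - X : L[X]).roots.toFinset := by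
        intro x _
        rw [Multiset.mem_toFinset, mem_roots hP0]
        simp [IsRoot.def, sub_eq_zero, hall x]
      have hdeg : (X ^ E - X : L[X]).natDegree = E := by
        rw [hE]
        exact FiniteField.X_pow_card_pow_sub_X_natDegree_eq L hm.ne' hq2
      have hcards : Fintype.card L ≤ E := by
        calc Fintype.card L = (Finset.univ : Finset L).card := rfl
        _ ≤ (X ^ E - X : L[X]).roots.toFinset.card := Finset.card_le_card hsub
        _ ≤ Multiset.card (X ^ E - X : L[X]).roots := Multiset.toFinset_card_le _
        _ ≤ (X ^ E - X : L[X]).natDegree := card_roots' _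
        _ = E := hdeg
      rw [hcardL, hE] at hcards
      have := (Nat.pow_le_pow_iff_right (by omega : 1 < q)).mp hcards
      omega
    obtain ⟨x, hx⟩ := hne
    have h2 : ab.2 = -ab.1 := by linear_combination h1
    have h3 : ab.1 * (x - x ^ E) = 0 := by
      have := hz x
      rw [h2] at this
      linear_combination this
    have ha : ab.1 = 0 := by
      rcases mul_eq_zero.mp h3 with h | h
      · exact h
      · exact absurd (sub_eq_zero.mp h).symm hx
    have hb : ab.2 = 0 := by rw [h2, ha, neg_zero]
    exact Prod.ext ha hb
  have hinj : Function.Injective Φ := by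
    rw [injective_iff_map_eq_zero, ← LinearMap.ker_eq_bot']
    exact LinearMap.ker_eq_bot'.mpr hker0
  refine ⟨LinearMap.range Φ, ?_, ?_⟩
  · rw [LinearMap.finrank_range_of_inj hinj, Module.finrank_prod, hn]
    omega
  · rintro f ⟨ab, rfl⟩ hf0
    have hab0 : ab ≠ 0 := fun h => hf0 (by rw [h, map_zero])
    have hkereq : LinearMap.ker (Φ ab) = LinearMap.ker (ℓ ab) := by
      have hcomp : Φ ab = Tf ∘ₗ (ℓ ab) := rfl
      rw [hcomp, LinearMap.ker_comp,
        LinearMap.BilinForm.nondegenerate_iff_ker_eq_bot.mp hTfnd, Submodule.comap_bot]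
    rw [hkereq]
    by_cases hb : ab.2 = 0
    · left
      have ha : ab.1 ≠ 0 := fun ha => hab0 (Prod.ext ha hb)
      have hbot : LinearMap.ker (ℓ ab) = ⊥ := by
        rw [LinearMap.ker_eq_bot']
        intro x hx
        rw [hℓapp, hb, zero_mul, add_zero] at hx
        exact (mul_eq_zero.mp hx).resolve_left ha
      rw [hbot, finrank_bot]
    · by_cases hkb : LinearMap.ker (ℓ ab) = ⊥
      · left
        rw [hkb, finrank_bot]
      · right
        obtain ⟨x0, hx0mem, hx00⟩ := Submodule.ne_bot_iff _ |>.mp hkb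
        have hx0z : ab.1 * x0 + ab.2 * x0 ^ E = 0 := by
          have := LinearMap.mem_ker.mp hx0mem
          rwa [hℓapp] at this
        have ha : ab.1 ≠ 0 := by
          intro ha0
          rw [ha0, zero_mul, zero_add, mul_eq_zero] at hx0z
          rcases hx0z with h | h
          · exact hb h
          · exact hx00 (pow_eq_zero_iff (by omega) |>.mp h)
        set c : L := -(ab.1 / ab.2) with hc
        have hc0 : c ≠ 0 := by
          rw [hc, neg_ne_zero]
          exact div_ne_zero ha hb
        have hrev : ab.2 * c = -ab.1 := by
          rw [hc]
          field_simp
        have hmemiff : ∀ x : L, ab.1 * x + ab.2 * x ^ E = 0 ↔ x ^ E = c * x := by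
          intro x
          constructor
          · intro h
            apply mul_left_cancel₀ hb
            rw [← mul_assoc, hrev]
            linear_combination h
          · intro h
            rw [h, ← mul_assoc, hrev]
            ring
        set d := E - 1 with hd
        have hd0 : 0 < d := by omega
        have hdE : d + 1 = E := by omega
        have hx0E : x0 ^ E = c * x0 := (hmemiff x0).mp hx0z
        have hx0d : x0 ^ d = c := by
          have : x0 ^ d * x0 = c * x0 := by
            rw [← pow_succ, hdE, hx0E]
          exact mul_right_cancel₀ hx00 this
        have hdvd' : d ∣ Fintype.card L - 1 := by
          obtain ⟨s, hs⟩ := hdvd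
          rw [hcardL, hd, hE, hs, pow_mul]
          simpa using Nat.sub_dvd_pow_sub_pow (q ^ m) 1 s
        have hsetker : ((LinearMap.ker (ℓ ab)) : Set L) = insert (0:L) {x : L | x ^ d = c} := by
          ext x
          simp only [SetLike.mem_coe, LinearMap.mem_ker, hℓapp, Set.mem_insert_iff,
            Set.mem_setOf_eq, hmemiff]
          constructor
          · intro h
            by_cases hx0' : x = 0
            · exact Or.inl hx0'
            · right
              have : x ^ d * x = c * x := by rw [← pow_succ, hdE, h]
              exact mul_right_cancel₀ hx0' this
          · rintro (rfl | h)
            · rw [zero_pow (by omega : E ≠ 0), mul_zero]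
            · rw [← hdE, pow_succ, h]
        have h0S : (0:L) ∉ {x : L | x ^ d = c} := by
          simp only [Set.mem_setOf_eq, zero_pow hd0.ne']
          exact fun h => hc0 h.symm
        have hcount : Nat.card (LinearMap.ker (ℓ ab)) = q ^ m := by
          have hstep : Nat.card (LinearMap.ker (ℓ ab))
              = ((LinearMap.ker (ℓ ab) : Set L)).ncard := by
            rw [← Nat.card_coe_set_eq]
            rfl
          calc Nat.card (LinearMap.ker (ℓ ab))
              = ((LinearMap.ker (ℓ ab) : Set L)).ncard := hstep
            _ = (insert (0:L) {x : L | x ^ d = c}).ncard := by rw [hsetker]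
            _ = {x : L | x ^ d = c}.ncard + 1 := Set.ncard_insert_of_notMem h0S (Set.toFinite _)
            _ = d + 1 := by rw [ncard_solset hd0 hdvd' hc0 hx0d]
            _ = q ^ m := by rw [hdE, hE]
        haveI : Fintype (LinearMap.ker (ℓ ab)) := Fintype.ofFinite _
        have hcard2 : Fintype.card (LinearMap.ker (ℓ ab)) =
            q ^ finrank K (LinearMap.ker (ℓ ab)) := card_eq_pow_finrank (K := K)
        rw [Nat.card_eq_fintype_card, hcard2] at hcount
        exact Nat.pow_right_injective hq2 hcount

/-- if `0 < r < n` and `n − r` divides `n`, then the bilinear forms on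
`F_q^n` contain a `2n`-dimensional subspace in which every nonzero element has rank
`r` or `n`. -/
theorem stmt9 (q n r : ℕ) (K : Type*) [Field K] [Fintype K]
    (hq : Fintype.card K = q) (hr0 : 0 < r) (hrn : r < n) (hdvd : (n - r) ∣ n) :
    ∃ M : Submodule K ((Fin n → K) →ₗ[K] (Fin n → K) →ₗ[K] K),
      Module.finrank K ↥M = 2 * n ∧
      ∀ f ∈ M, f ≠ 0 →
        n - Module.finrank K (LinearMap.ker f) = r ∨
        n - Module.finrank K (LinearMap.ker f) = n := by
  classical
  have hn0 : 0 < n := by omega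
  set m := n - r with hm
  have hm0 : 0 < m := by omega
  have hmn : m < n := by omega
  obtain ⟨EF, hcardEF⟩ := exists_bigfield K n hn0
  set L := ↥EF with hL
  have hq2 : 2 ≤ Fintype.card K := Fintype.one_lt_card
  haveI : Finite L := by
    have hpos : 0 < Nat.card L := by
      rw [hcardEF]
      positivity
    exact (Nat.card_pos_iff.mp hpos).2
  haveI : Fintype L := Fintype.ofFinite L
  have hnL : finrank K L = n := by
    have h1 : Fintype.card L = Fintype.card K ^ finrank K L := card_eq_pow_finrank (K := K)
    rw [← Nat.card_eq_fintype_card, hcardEF] at h1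
    exact (Nat.pow_right_injective hq2 h1.symm)
  obtain ⟨M, hMrank, hMker⟩ := key K L n m hnL hm0 hmn hdvd
  -- transport along a linear equivalence
  let bas : Basis (Fin n) K L := (Module.finBasis K L).reindex (finCongr hnL)
  let e : (Fin n → K) ≃ₗ[K] L := bas.equivFun.symm
  let G : (L →ₗ[K] K) ≃ₗ[K] ((Fin n → K) →ₗ[K] K) :=
    LinearEquiv.arrowCongr e.symm (LinearEquiv.refl K K)
  let E' : (L →ₗ[K] L →ₗ[K] K) ≃ₗ[K] ((Fin n → K) →ₗ[K] (Fin n → K) →ₗ[K] K) :=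
    LinearEquiv.arrowCongr e.symm G
  refine ⟨Submodule.map (E' : (L →ₗ[K] L →ₗ[K] K) →ₗ[K] _) M, ?_, ?_⟩
  · rw [LinearEquiv.finrank_map_eq, hMrank]
  · rintro f ⟨g, hgM, rfl⟩ hf0
    have hg0 : g ≠ 0 := by
      intro h
      apply hf0
      rw [h]
      simp
    have hker : LinearMap.ker (E' g : (Fin n → K) →ₗ[K] (Fin n → K) →ₗ[K] K)
        = Submodule.comap (e : (Fin n → K) →ₗ[K] L) (LinearMap.ker g) := by
      ext x
      simp only [LinearMap.mem_ker, Submodule.mem_comap, LinearEquiv.coe_coe]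
      have harr : (E' g) x = G (g (e x)) := rfl
      rw [harr, EmbeddingLike.map_eq_zero_iff]
    have hfr : finrank K (LinearMap.ker (E' g : (Fin n → K) →ₗ[K] (Fin n → K) →ₗ[K] K))
        = finrank K (LinearMap.ker g) := by
      rw [hker, Submodule.comap_equiv_eq_map_symm]
      exact LinearEquiv.finrank_map_eq _ _
    simp only [LinearEquiv.coe_coe]
    rcases hMker g hgM hg0 with h | h
    · right
      rw [hfr, h]
      omega
    · left
      rw [hfr, h]
      omega
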